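/- For every n ≥ 3, the rational number M(n) := (∑_{i=2}^{n} (i/6) · C(n, i) · C(n−1, i−1)) / C(2n−1, n−1) satisfies n/12 ≤ M(n) ≤ n/6. In particular, the mean squared linking number of two disjoint n-cycles taken over all pairs of disjoint monotonic n-cycles across all random book embeddings of K_{2n} grows linearly, i.e., is of order Θ(n). -/
import Mathlib

lemma sum_choose_sq (m : ℕ) :
    ∑ j ∈ Finset.range (m+1), (m.choose j)^2 = (2*m).choose m := by
  rw [two_mul, Nat.add_choose_eq, Finset.Nat.sum_antidiagonal_eq_sum_range_succ_mk]
  refine Finset.sum_congr rfl fun j hj => ?_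
  rw [sq, Nat.choose_symm (by simpa using Nat.lt_succ_iff.mp (Finset.mem_range.mp hj))]

lemma central_lb (m : ℕ) (hm : 2 ≤ m) : 2*m + 2 ≤ (2*m).choose m := by
  induction m with
  | zero => omega
  | succ k ih =>
    rcases Nat.lt_or_ge k 2 with h | h
    · interval_cases k <;> simp_all <;> decide
    · have ih' := ih h
      have key := Nat.succ_mul_centralBinom_succ k
      have hck : Nat.centralBinom k = (2*k).choose k := rfl
      have h2 : (2*(k+1)).choose (k+1) = Nat.centralBinom (k+1) := rfl
      rw [h2]
      nlinarith [Nat.centralBinom_pos (k+1)]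

/-- For every `n ≥ 3`, the mean squared linking number
`M(n) = (∑_{i=2}^{n} (i/6) · C(n,i) · C(n-1,i-1)) / C(2n-1, n-1)` of two disjoint
`n`-cycles, taken over all pairs of disjoint monotonic `n`-cycles across all random book
embeddings of `K_{2n}`, satisfies `n/12 ≤ M(n) ≤ n/6`; in particular it is `Θ(n)`. -/
theorem mean_squared_linking_bounds (n : ℕ) (hn : 3 ≤ n) :
    (n : ℚ) / 12 ≤
      (∑ i ∈ Finset.Icc 2 n,
        ((i : ℚ) / 6) * n.choose i * (n - 1).choose (i - 1)) / (2 * n - 1).choose (n - 1)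
    ∧ (∑ i ∈ Finset.Icc 2 n,
        ((i : ℚ) / 6) * n.choose i * (n - 1).choose (i - 1)) / (2 * n - 1).choose (n - 1)
      ≤ (n : ℚ) / 6 := by
  obtain ⟨m, rfl⟩ : ∃ m, n = m + 1 := ⟨n - 1, by omega⟩
  have hm : 2 ≤ m := by omega
  have h1 : (m + 1) - 1 = m := rfl
  have h2 : 2 * (m + 1) - 1 = 2*m + 1 := by omega
  rw [h1, h2]
  -- rewrite the sum
  have himg : Finset.Icc 2 (m+1) = (Finset.range m).image (· + 2) := by
    ext x
    simp only [Finset.mem_Icc, Finset.mem_image, Finset.mem_range]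
    constructor
    · rintro ⟨hx1, hx2⟩; exact ⟨x - 2, by omega, by omega⟩
    · rintro ⟨j, hj, rfl⟩; omega
  have hsum : (∑ i ∈ Finset.Icc 2 (m+1),
        ((i : ℚ) / 6) * (m+1).choose i * m.choose (i - 1))
      = ((m : ℚ) + 1)/6 * ∑ j ∈ Finset.range m, ((m.choose (j+1) : ℚ))^2 := by
    rw [himg, Finset.sum_image (fun a _ b _ h => by omega), Finset.mul_sum]
    refine Finset.sum_congr rfl fun j _ => ?_
    have h3 : (j + 2) - 1 = j + 1 := rfl
    rw [h3]
    have hkey := Nat.add_one_mul_choose_eq m (j+1)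
    have hq : ((m:ℚ)+1) * (m.choose (j+1)) = ((m+1).choose (j+2)) * ((j:ℚ)+2) := by
      exact_mod_cast congrArg (Nat.cast : ℕ → ℚ) hkey
    push_cast
    linear_combination (-(m.choose (j+1) : ℚ)/6) * hq
  rw [hsum]
  -- the square-sum identity
  have hT : 1 + ∑ j ∈ Finset.range m, (m.choose (j+1))^2 = (2*m).choose m := by
    have h := sum_choose_sq m
    rw [Finset.sum_range_succ'] at h
    simpa [add_comm] using h
  have hTQ : (∑ j ∈ Finset.range m, ((m.choose (j+1) : ℚ))^2)
      = ((2*m).choose m : ℚ) - 1 := by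
    have := congrArg (Nat.cast : ℕ → ℚ) hT
    push_cast at this
    linarith
  rw [hTQ]
  set C : ℚ := ((2*m).choose m : ℚ) with hCdef
  set D : ℚ := ((2*m+1).choose m : ℚ) with hDdef
  have hD0 : 0 < D := by
    have h := Nat.choose_pos (show m ≤ 2*m+1 by omega)
    rw [hDdef]; exact_mod_cast h
  have hDC : ((m:ℚ)+1) * D = (2*(m:ℚ)+1) * C := by
    have hs := Nat.add_one_mul_choose_eq (2*m) m
    have hsym : (2*m+1).choose m = (2*m+1).choose (m+1) := by
      have h := Nat.choose_symm (show m+1 ≤ 2*m+1 by omega)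
      have hsub : (2*m+1) - (m+1) = m := by omega
      rw [hsub] at h
      exact h
    have hsQ : (2*(m:ℚ)+1) * ((2*m).choose m : ℚ)
        = ((2*m+1).choose (m+1) : ℚ) * ((m:ℚ)+1) := by
      exact_mod_cast congrArg (Nat.cast : ℕ → ℚ) hs
    rw [hDdef, hCdef, hsym]
    linarith [hsQ]
  have hClb : 2*(m:ℚ) + 2 ≤ C := by
    have h := central_lb m hm
    rw [hCdef]; exact_mod_cast h
  have hm0 : (0:ℚ) ≤ m := Nat.cast_nonneg m
  push_cast
  constructor
  · rw [le_div_iff₀ hD0]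
    nlinarith [hDC, hClb, hm0]
  · rw [div_le_iff₀ hD0]
    nlinarith [hDC, hClb, hm0]
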